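/- Let n ≥ 2 and let Hⁿ = {x ∈ ℝⁿ : xₙ > 0}. For all x,y ∈ Hⁿ one has v_{Hⁿ}(x,y) ≤ ρ_{Hⁿ}(x,y), and the inequality is sharp: for every ε > 0 there exist distinct x,y ∈ Hⁿ with v_{Hⁿ}(x,y) > (1−ε)·ρ_{Hⁿ}(x,y). -/

import Mathlib

open EuclideanGeometry Real Set

/-- The visual angle metric on a domain `G ⊊ ℝⁿ`:
`v_G(x,y) = sup_{z ∈ ∂G} ∠(x,z,y)`. -/
noncomputable def visualAngle {n : ℕ} (G : Set (EuclideanSpace ℝ (Fin n)))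
    (x y : EuclideanSpace ℝ (Fin n)) : ℝ :=
  sSup ((fun z => ∠ x z y) '' frontier G)

/-- Inverse hyperbolic cosine. -/
noncomputable def arcosh (t : ℝ) : ℝ := Real.log (t + Real.sqrt (t ^ 2 - 1))

/-- The upper half space `Hⁿ = {x ∈ ℝⁿ : xₙ > 0}` with `n = m + 2 ≥ 2`. -/
def upperHalf (m : ℕ) : Set (EuclideanSpace ℝ (Fin (m + 2))) :=
  {x | 0 < x (Fin.last (m + 1))}

/-- The hyperbolic metric of the upper half space:
`ρ_{Hⁿ}(x,y) = arcosh(1 + |x−y|²/(2 xₙ yₙ))`. -/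
noncomputable def rhoHalf {m : ℕ} (x y : EuclideanSpace ℝ (Fin (m + 2))) : ℝ :=
  _root_.arcosh (1 + dist x y ^ 2 / (2 * x (Fin.last (m + 1)) * y (Fin.last (m + 1))))

namespace VAaux

lemma arcosh_eq {s : ℝ} (hs : 0 ≤ s) : _root_.arcosh (1 + 2 * s ^ 2) = 2 * Real.arsinh s := by
  have h0 : (0:ℝ) ≤ 1 + s ^ 2 := by positivity
  have hr : Real.sqrt ((1 + 2*s^2) ^ 2 - 1) = 2 * s * Real.sqrt (1 + s^2) := by
    rw [show (1 + 2*s^2) ^ 2 - 1 = (2 * s * Real.sqrt (1 + s^2))^2 by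
      rw [mul_pow, mul_pow, Real.sq_sqrt h0]; ring]
    exact Real.sqrt_sq (by positivity)
  have h2 : (1 + 2*s^2) + 2 * s * Real.sqrt (1 + s^2) = (s + Real.sqrt (1 + s^2))^2 := by
    rw [add_sq, Real.sq_sqrt h0]; ring
  rw [_root_.arcosh, hr, h2, Real.log_pow, Real.arsinh]
  push_cast; ring

lemma arctan_le_arsinh {s : ℝ} (hs : 0 ≤ s) : Real.arctan s ≤ Real.arsinh s := by
  have hd : ∀ x : ℝ, HasDerivAt (fun t => Real.arsinh t - Real.arctan t)
      ((Real.sqrt (1 + x ^ 2))⁻¹ - 1 / (1 + x ^ 2)) x := fun x =>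
    (Real.hasDerivAt_arsinh x).sub (Real.hasDerivAt_arctan x)
  have hmono : Monotone fun t => Real.arsinh t - Real.arctan t := by
    apply monotone_of_deriv_nonneg (fun x => (hd x).differentiableAt)
    intro x
    rw [(hd x).deriv]
    have h1 : (0:ℝ) < 1 + x ^ 2 := by positivity
    have h3 : 0 < Real.sqrt (1 + x ^ 2) := Real.sqrt_pos.2 h1
    have h2 : Real.sqrt (1 + x ^ 2) ≤ 1 + x ^ 2 := by
      nth_rewrite 2 [← Real.sqrt_sq h1.le]
      exact Real.sqrt_le_sqrt (by nlinarith [sq_nonneg x, sq_nonneg (x^2)])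
    have h4 : (1 + x ^ 2)⁻¹ ≤ (Real.sqrt (1 + x ^ 2))⁻¹ := inv_anti₀ h3 h2
    rw [one_div] at *
    linarith
  have := hmono hs
  simpa using this

lemma arctan_pos' {s : ℝ} (hs : 0 < s) : 0 < Real.arctan s := by
  have := Real.arctan_strictMono hs; rwa [Real.arctan_zero] at this

lemma arctan_nonneg' {s : ℝ} (hs : 0 ≤ s) : 0 ≤ Real.arctan s := by
  have := Real.arctan_strictMono.monotone hs; rwa [Real.arctan_zero] at this

lemma div_lt_arctan {s : ℝ} (hs : 0 < s) : s / (1 + s^2) < Real.arctan s := by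
  have hw : 0 < Real.arctan s := arctan_pos' hs
  have hsin := Real.sin_lt (by linarith : 0 < 2 * Real.arctan s)
  rw [Real.sin_two_mul, Real.sin_arctan, Real.cos_arctan] at hsin
  have hq : (0:ℝ) < Real.sqrt (1 + s^2) := Real.sqrt_pos.2 (by positivity)
  have hqq : Real.sqrt (1+s^2) * Real.sqrt (1+s^2) = 1 + s^2 := Real.mul_self_sqrt (by positivity)
  have heq : 2 * (s / Real.sqrt (1 + s ^ 2)) * (1 / Real.sqrt (1 + s ^ 2)) = 2 * (s/(1+s^2)) := by
    field_simp
    exact (Real.sq_sqrt (by positivity)).symm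
  rw [heq] at hsin; linarith

lemma arsinh_le_self {s : ℝ} (hs : 0 ≤ s) : Real.arsinh s ≤ s :=
  (Real.arsinh_le_arsinh.mpr (Real.self_le_sinh_iff.mpr hs)).trans_eq (Real.arsinh_sinh s)

lemma cos_two_arctan (s : ℝ) : Real.cos (2 * Real.arctan s) = (1 - s^2)/(1 + s^2) := by
  rw [Real.cos_two_mul, Real.cos_arctan, div_pow, one_pow,
    Real.sq_sqrt (by positivity : (0:ℝ) ≤ 1 + s^2)]
  field_simp
  ring

lemma frac_ineq {a b c h k s I : ℝ} (hapos : 0 < a) (hbpos : 0 < b)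
    (hh : 0 < h) (hk : 0 < k) (hc : 0 ≤ c)
    (hlaw : c^2 = a^2 + b^2 - 2*I) (htri : c^2 + 4*(h*k) ≤ (a+b)^2)
    (hc2s : c^2 = 4*(h*k)*s^2) : (1 - s^2)*(a*b) ≤ I*(1 + s^2) := by
  have t1 : (0:ℝ) ≤ 4*(h*k) * (a-b)^2 := by positivity
  have t2 : (0:ℝ) ≤ c^2 * ((a+b)^2 - (c^2 + 4*(h*k))) :=
    mul_nonneg (sq_nonneg c) (by linarith)
  have hIval : I = (a^2 + b^2 - c^2)/2 := by linarith
  have hP : a*b*(4*(h*k) - c^2) ≤ ((a^2+b^2-c^2)/2) * (4*(h*k) + c^2) := by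
    nlinarith [t1, t2]
  have hG4 : 4*(h*k) * ((1 - s^2)*(a*b)) ≤ 4*(h*k) * (((a^2+b^2-c^2)/2)*(1+s^2)) := by
    calc 4*(h*k) * ((1-s^2)*(a*b)) = a*b*(4*(h*k) - c^2) := by rw [hc2s]; ring
      _ ≤ ((a^2+b^2-c^2)/2) * (4*(h*k) + c^2) := hP
      _ = 4*(h*k) * (((a^2+b^2-c^2)/2)*(1+s^2)) := by rw [hc2s]; ring
  rw [hIval]
  exact le_of_mul_le_mul_left hG4 (by positivity)

lemma final_num {ε t : ℝ} (he : 0 < ε) (ht0 : 0 < t) (hts : t^2 ≤ ε) :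
    (1 - ε) * (2 * Real.arsinh t) < 2 * Real.arctan t := by
  have hp : (0:ℝ) < 1 + t^2 := by positivity
  rcases le_or_gt 1 ε with hcase | hcase
  · have harsinh : 0 ≤ Real.arsinh t := by
      have h := Real.arsinh_le_arsinh.mpr ht0.le
      rwa [Real.arsinh_zero] at h
    have h1 : (1 - ε) * (2 * Real.arsinh t) ≤ 0 := by nlinarith
    linarith [arctan_pos' ht0]
  · have h1e : 0 < 1 - ε := by linarith
    have hkey : (1-ε)*(1+t^2) < 1 := by nlinarith
    have c1 : (1-ε)*(2*Real.arsinh t) ≤ (1-ε)*(2*t) := by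
      have := arsinh_le_self ht0.le
      nlinarith
    have c2 : (1-ε)*(2*t) < 2*(t/(1+t^2)) := by
      rw [show 2*(t/(1+t^2)) = 2*t/(1+t^2) by ring, lt_div_iff₀ hp]
      nlinarith
    have c3 : 2*(t/(1+t^2)) < 2*Real.arctan t := by
      linarith [div_lt_arctan ht0]
    linarith

lemma contEval (m : ℕ) :
    Continuous (fun w : EuclideanSpace ℝ (Fin (m+2)) => w (Fin.last (m+1))) :=
  (EuclideanSpace.proj (Fin.last (m+1)) : EuclideanSpace ℝ (Fin (m+2)) →L[ℝ] ℝ).continuous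

lemma isOpen_upperHalf (m : ℕ) : IsOpen (upperHalf m) :=
  isOpen_lt continuous_const (contEval m)

lemma frontier_subset (m : ℕ) {z : EuclideanSpace ℝ (Fin (m+2))}
    (hz : z ∈ frontier (upperHalf m)) : z (Fin.last (m+1)) = 0 := by
  rw [(isOpen_upperHalf m).frontier_eq] at hz
  obtain ⟨hzc, hzo⟩ := hz
  have h1 : z ∈ {w : EuclideanSpace ℝ (Fin (m+2)) | 0 ≤ w (Fin.last (m+1))} :=
    closure_minimal (fun w hw => le_of_lt hw) (isClosed_le continuous_const (contEval m)) hzc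
  have h2 : ¬ (0 < z (Fin.last (m+1))) := hzo
  exact le_antisymm (not_lt.1 h2) h1

lemma mem_frontier (m : ℕ) {z : EuclideanSpace ℝ (Fin (m+2))}
    (hz : z (Fin.last (m+1)) = 0) : z ∈ frontier (upperHalf m) := by
  rw [(isOpen_upperHalf m).frontier_eq]
  constructor
  · rw [Metric.mem_closure_iff]
    intro δ hδ
    refine ⟨z + (δ/2) • EuclideanSpace.single (Fin.last (m+1)) (1:ℝ), ?_, ?_⟩
    · show 0 < (z + (δ/2) • EuclideanSpace.single (Fin.last (m+1)) (1:ℝ)) (Fin.last (m+1))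
      simp [hz, EuclideanSpace.single_apply, hδ]
    · rw [dist_self_add_right, norm_smul, EuclideanSpace.norm_single]
      simp [abs_of_pos hδ]
      linarith
  · simp [upperHalf, hz]

lemma rho_nonneg {m : ℕ} (x y : EuclideanSpace ℝ (Fin (m + 2)))
    (hx : 0 < x (Fin.last (m + 1))) (hy : 0 < y (Fin.last (m + 1))) :
    0 ≤ rhoHalf x y := by
  have hd : 0 ≤ dist x y ^ 2 / (2 * x (Fin.last (m + 1)) * y (Fin.last (m + 1))) := by positivity
  rw [rhoHalf, _root_.arcosh]
  apply Real.log_nonneg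
  have := Real.sqrt_nonneg
    ((1 + dist x y ^ 2 / (2 * x (Fin.last (m + 1)) * y (Fin.last (m + 1)))) ^ 2 - 1)
  linarith

lemma angle_le_rho {m : ℕ} (x y z : EuclideanSpace ℝ (Fin (m + 2)))
    (hx : 0 < x (Fin.last (m + 1))) (hy : 0 < y (Fin.last (m + 1)))
    (hz : z (Fin.last (m + 1)) = 0) : ∠ x z y ≤ rhoHalf x y := by
  set n := Fin.last (m + 1) with hn
  set e : EuclideanSpace ℝ (Fin (m+2)) := EuclideanSpace.single n (1:ℝ) with he
  have hinner : ∀ w : EuclideanSpace ℝ (Fin (m+2)), (inner ℝ w e : ℝ) = w n := by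
    intro w; rw [he, EuclideanSpace.inner_single_right]; simp
  have hnorme : ‖e‖ = 1 := by rw [he, EuclideanSpace.norm_single]; simp
  set h := x n with hh
  set k := y n with hk
  set a := ‖x - z‖ with ha
  set b := ‖y - z‖ with hb
  set c := ‖x - y‖ with hc
  have hah : h ≤ a := by
    have h1 : (inner ℝ (x - z) e : ℝ) ≤ ‖x - z‖ * ‖e‖ := real_inner_le_norm _ _
    rw [hinner, hnorme, mul_one] at h1
    simpa [hz] using h1
  have hbk : k ≤ b := by
    have h1 : (inner ℝ (y - z) e : ℝ) ≤ ‖y - z‖ * ‖e‖ := real_inner_le_norm _ _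
    rw [hinner, hnorme, mul_one] at h1
    simpa [hz] using h1
  have hapos : 0 < a := lt_of_lt_of_le hx hah
  have hbpos : 0 < b := lt_of_lt_of_le hy hbk
  have hcpos : 0 ≤ c := norm_nonneg _
  have hlaw : c^2 = a^2 + b^2 - 2 * (inner ℝ (x - z) (y - z) : ℝ) := by
    rw [hc, show x - y = (x - z) - (y - z) by abel, norm_sub_sq_real, ha, hb]; ring
  set ybar : EuclideanSpace ℝ (Fin (m+2)) := y - (2 * k) • e with hybar
  have hzybar : ‖z - ybar‖ = b := by
    have hdecomp : z - ybar = (z - y) + (2*k) • e := by rw [hybar]; abel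
    have hsq : ‖z - ybar‖^2 = b^2 := by
      rw [hdecomp, norm_add_sq_real, real_inner_smul_right, hinner, norm_smul, norm_sub_rev]
      have : (z - y) n = -k := by simp [hz, hk]
      rw [this, hnorme, Real.norm_eq_abs, abs_of_nonneg (by positivity : (0:ℝ) ≤ 2*k)]
      ring
    have := congrArg Real.sqrt hsq
    rwa [Real.sqrt_sq (norm_nonneg _), Real.sqrt_sq hbpos.le] at this
  have hxbar : ‖x - ybar‖^2 = c^2 + 4*(h*k) := by
    have hdecomp : x - ybar = (x - y) + (2*k) • e := by rw [hybar]; abel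
    rw [hdecomp, norm_add_sq_real, real_inner_smul_right, hinner, norm_smul]
    have hxy : (x - y) n = h - k := by simp [hh, hk]
    rw [hxy, hnorme, Real.norm_eq_abs, abs_of_nonneg (by positivity : (0:ℝ) ≤ 2*k)]
    ring
  have htri : c^2 + 4*(h*k) ≤ (a+b)^2 := by
    have h1 : ‖x - ybar‖ ≤ a + b := by
      have := dist_triangle x z ybar
      rw [dist_eq_norm, dist_eq_norm, dist_eq_norm, hzybar] at this
      exact this
    calc c^2 + 4*(h*k) = ‖x - ybar‖^2 := hxbar.symm
      _ ≤ (a+b)^2 := by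
          apply pow_le_pow_left₀ (norm_nonneg _) h1
  have hhk : 0 < h * k := mul_pos hx hy
  set s : ℝ := c / (2 * Real.sqrt (h*k)) with hs
  have hsqk : 0 < Real.sqrt (h*k) := Real.sqrt_pos.2 hhk
  have hs0 : 0 ≤ s := by positivity
  have hc2s : c^2 = 4*(h*k)*s^2 := by
    rw [hs, div_pow, mul_pow, Real.sq_sqrt hhk.le]
    field_simp
    ring
  have hkey : Real.cos (2 * Real.arctan s) ≤ (inner ℝ (x - z) (y - z) : ℝ) / (a * b) := by
    rw [cos_two_arctan, div_le_div_iff₀ (by positivity) (by positivity)]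
    exact frac_ineq hapos hbpos hx hy hcpos hlaw htri hc2s
  have hangle : ∠ x z y = Real.arccos ((inner ℝ (x - z) (y - z) : ℝ) / (a * b)) := rfl
  have hrho : rhoHalf x y = 2 * Real.arsinh s := by
    have hd : dist x y = c := dist_eq_norm x y
    have hfrac : dist x y ^ 2 / (2 * x n * y n) = 2 * s^2 := by
      rw [hd, hc2s, ← hh, ← hk]
      field_simp
      ring
    rw [rhoHalf, ← hn, hfrac, arcosh_eq hs0]
  rw [hangle, hrho]
  have harctan0 : 0 ≤ Real.arctan s := arctan_nonneg' hs0
  calc Real.arccos ((inner ℝ (x - z) (y - z) : ℝ) / (a * b))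
      ≤ Real.arccos (Real.cos (2 * Real.arctan s)) := by
        rw [Real.arccos_eq_pi_div_two_sub_arcsin, Real.arccos_eq_pi_div_two_sub_arcsin]
        have := Real.monotone_arcsin hkey
        linarith
    _ = 2 * Real.arctan s := Real.arccos_cos (by linarith)
        (by linarith [Real.arctan_lt_pi_div_two s, Real.pi_pos])
    _ ≤ 2 * Real.arsinh s := by linarith [arctan_le_arsinh hs0]

end VAaux

theorem stmt6 (m : ℕ) :
    (∀ x ∈ upperHalf m, ∀ y ∈ upperHalf m,
      visualAngle (upperHalf m) x y ≤ rhoHalf x y) ∧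
    (∀ ε : ℝ, 0 < ε →
      ∃ x ∈ upperHalf m, ∃ y ∈ upperHalf m,
        x ≠ y ∧ (1 - ε) * rhoHalf x y < visualAngle (upperHalf m) x y) := by
  constructor
  · intro x hx y hy
    apply Real.sSup_le
    · rintro θ ⟨z, hzf, rfl⟩
      exact VAaux.angle_le_rho x y z hx hy (VAaux.frontier_subset m hzf)
    · exact VAaux.rho_nonneg x y hx hy
  · intro ε hε
    set n := Fin.last (m+1) with hn
    have hne : (0 : Fin (m+2)) ≠ n := by
      rw [hn]
      simp [Fin.ext_iff, Fin.last]
    set e0 : EuclideanSpace ℝ (Fin (m+2)) := EuclideanSpace.single (0 : Fin (m+2)) (1:ℝ) with he0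
    set s : ℝ := min (Real.sqrt ε) (1/2) with hsdef
    have hs0 : 0 < s := lt_min (Real.sqrt_pos.2 hε) (by norm_num)
    set x : EuclideanSpace ℝ (Fin (m+2)) := EuclideanSpace.single n (1:ℝ) with hx
    set y : EuclideanSpace ℝ (Fin (m+2)) := x + (2*s) • e0 with hy
    set z0 : EuclideanSpace ℝ (Fin (m+2)) := s • e0 with hz0
    have he0n : e0 n = 0 := by rw [he0]; simp [EuclideanSpace.single_apply, hne.symm]
    have hxn : x n = 1 := by rw [hx]; simp [EuclideanSpace.single_apply]
    have hyn : y n = 1 := by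
      rw [hy]
      show x n + ((2*s) • e0) n = 1
      simp [he0n, hxn]
    have hxm : x ∈ upperHalf m := by show 0 < x n; rw [hxn]; norm_num
    have hym : y ∈ upperHalf m := by show 0 < y n; rw [hyn]; norm_num
    have he00 : e0 (0 : Fin (m+2)) = 1 := by rw [he0]; simp [EuclideanSpace.single_apply]
    have hA0 : x (0 : Fin (m+2)) = 0 := by rw [hx]; simp [EuclideanSpace.single_apply, hne]
    have hxy : x ≠ y := by
      intro hEq
      have := congrArg (fun w : EuclideanSpace ℝ (Fin (m+2)) => w (0 : Fin (m+2))) hEq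
      simp only [hy] at this
      rw [show (x + (2*s) • e0) (0 : Fin (m+2)) = x 0 + (2*s) * e0 0 from rfl] at this
      rw [hA0, he00] at this
      simp at this
      linarith
    refine ⟨x, hxm, y, hym, hxy, ?_⟩
    -- distance and rho
    have hdist : dist x y = 2*s := by
      rw [dist_eq_norm, hy, show x - (x + (2*s) • e0) = -((2*s) • e0) by abel,
        norm_neg, norm_smul, he0, EuclideanSpace.norm_single]
      simp [abs_of_pos hs0]
    have hrho : rhoHalf x y = 2 * Real.arsinh s := by
      rw [rhoHalf, ← hn, hdist, hxn, hyn]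
      rw [show (2*s)^2 / (2*1*1) = 2*s^2 by ring]
      exact VAaux.arcosh_eq hs0.le
    -- the boundary point
    have hz0n : z0 n = 0 := by
      rw [hz0]
      show s * e0 n = 0
      rw [he0n, mul_zero]
    -- angle computation
    have hu : x - z0 = x - s • e0 := by rw [hz0]
    have hv : y - z0 = x + s • e0 := by
      rw [hy, hz0]
      module
    have hinnerAB : (inner ℝ x e0 : ℝ) = 0 := by
      rw [he0, EuclideanSpace.inner_single_right]
      simp [hA0]
    have hinnerBA : (inner ℝ e0 x : ℝ) = 0 := by
      rw [real_inner_comm]; exact hinnerAB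
    have hnA : ‖x‖ = 1 := by rw [hx, EuclideanSpace.norm_single]; simp
    have hne0 : ‖e0‖ = 1 := by rw [he0, EuclideanSpace.norm_single]; simp
    have hiuv : (inner ℝ (x - z0) (y - z0) : ℝ) = 1 - s^2 := by
      rw [hu, hv, inner_sub_left, inner_add_right, inner_add_right,
        real_inner_smul_left, real_inner_smul_left, real_inner_smul_right,
        real_inner_smul_right, real_inner_self_eq_norm_sq, real_inner_self_eq_norm_sq,
        hnA, hne0, hinnerAB, hinnerBA]
      ring
    have hnu : ‖x - z0‖^2 = 1 + s^2 := by
      rw [hu, norm_sub_sq_real, real_inner_smul_right, hinnerAB, norm_smul, hnA, hne0,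
        Real.norm_eq_abs, abs_of_pos hs0]
      ring
    have hnv : ‖y - z0‖^2 = 1 + s^2 := by
      rw [hv, norm_add_sq_real, real_inner_smul_right, hinnerAB, norm_smul, hnA, hne0,
        Real.norm_eq_abs, abs_of_pos hs0]
      ring
    have hp : (0:ℝ) < 1 + s^2 := by positivity
    have hnu' : ‖x - z0‖ = Real.sqrt (1 + s^2) := by
      rw [← hnu, Real.sqrt_sq (norm_nonneg _)]
    have hnv' : ‖y - z0‖ = Real.sqrt (1 + s^2) := by
      rw [← hnv, Real.sqrt_sq (norm_nonneg _)]
    have hangle : ∠ x z0 y = 2 * Real.arctan s := by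
      have h1 : ∠ x z0 y
          = Real.arccos ((inner ℝ (x - z0) (y - z0) : ℝ) / (‖x - z0‖ * ‖y - z0‖)) := rfl
      rw [h1, hiuv, hnu', hnv', Real.mul_self_sqrt hp.le, ← VAaux.cos_two_arctan s]
      exact Real.arccos_cos (by linarith [VAaux.arctan_nonneg' hs0.le])
        (by linarith [Real.arctan_lt_pi_div_two s, Real.pi_pos])
    -- lower bound for visualAngle
    have hbdd : BddAbove ((fun z => ∠ x z y) '' frontier (upperHalf m)) := by
      refine ⟨π, ?_⟩
      rintro θ ⟨z, _, rfl⟩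
      exact EuclideanGeometry.angle_le_pi _ _ _
    have hmem : ∠ x z0 y ∈ (fun z => ∠ x z y) '' frontier (upperHalf m) :=
      ⟨z0, VAaux.mem_frontier m hz0n, rfl⟩
    have hva : ∠ x z0 y ≤ visualAngle (upperHalf m) x y := le_csSup hbdd hmem
    -- final strict inequality
    have hεs : s^2 ≤ ε := by
      calc s^2 ≤ (Real.sqrt ε)^2 := by
            apply pow_le_pow_left₀ hs0.le (min_le_left _ _)
        _ = ε := Real.sq_sqrt hε.le
    have hfinal : (1 - ε) * rhoHalf x y < 2 * Real.arctan s := by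
      rw [hrho]
      exact VAaux.final_num hε hs0 hεs
    calc (1 - ε) * rhoHalf x y < 2 * Real.arctan s := hfinal
      _ = ∠ x z0 y := hangle.symm
      _ ≤ visualAngle (upperHalf m) x y := hva
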